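/- Let d ≥ 2, 0 < ε < 1/2, and 0 < η ≤ ε/2. Let x_0, …, x_d ∈ ℝ^d be the vertices of a regular simplex with side length 1, and let ρ_{*,η} = (1/((d+1)|B(0;η)|)) Σ_{i=0}^d χ_{B(x_i;η)}, the probability measure uniformly distributed on the union of the balls of radius η centered at the vertices. Let W_ε(x) = −1 if ||x|−1| ≤ ε and W_ε(x) = 0 otherwise, with energy E_ε. Then E_ε[ρ_{*,η}] = −d/(2(d+1)). -/

import Mathlib

open MeasureTheory Metric Filter Set
open scoped ENNReal NNReal Topology

noncomputable section

/-- The part of an extended-real number as an `ℝ≥0∞` value: negatives (and `⊥`)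
are sent to `0`, and `⊤` to `⊤`. -/
def EReal.toENNReal' (x : EReal) : ℝ≥0∞ := if x = ⊤ then ⊤ else ENNReal.ofReal x.toReal

/-- Integral of an `(ℝ ∪ {±∞})`-valued function: positive part minus negative part. -/
def eInt {X : Type*} [MeasurableSpace X] (μ : Measure X) (f : X → EReal) : EReal :=
  ((∫⁻ x, (f x).toENNReal' ∂μ : ℝ≥0∞) : EReal) -
    ((∫⁻ x, (-(f x)).toENNReal' ∂μ : ℝ≥0∞) : EReal)

/-- The interaction energy `E[ρ] = (1/2) ∫∫ W (x - y) dρ(y) dρ(x)`. -/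
def energy (d : ℕ) (W : EuclideanSpace ℝ (Fin d) → EReal)
    (ρ : Measure (EuclideanSpace ℝ (Fin d))) : EReal :=
  ((1/2 : ℝ) : EReal) * eInt (ρ.prod ρ) (fun p => W (p.1 - p.2))

/-- Condition (W0): locally integrable, bounded from below, lower semicontinuous, even. -/
def W0 (d : ℕ) (W : EuclideanSpace ℝ (Fin d) → EReal) : Prop :=
  (∀ K : Set (EuclideanSpace ℝ (Fin d)), IsCompact K → ∫⁻ x in K, (W x).toENNReal' < ⊤) ∧
  (∃ M : ℝ, ∀ x, (M : EReal) ≤ W x) ∧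
  LowerSemicontinuous W ∧ (∀ x, W (-x) = W x)

/-- A measure on `ℝ^d` is radially symmetric if it is invariant under every
origin-fixing rotation (linear isometry) of `ℝ^d`. -/
def RadiallySymmetric {d : ℕ} (ρ : Measure (EuclideanSpace ℝ (Fin d))) : Prop :=
  ∀ Q : EuclideanSpace ℝ (Fin d) ≃ₗᵢ[ℝ] EuclideanSpace ℝ (Fin d), Measure.map (⇑Q) ρ = ρ

/-- `μ` is a minimizer of the interaction energy with potential `W` over probability
measures on `ℝ^d`. -/
def IsMinimizer (d : ℕ) (W : EuclideanSpace ℝ (Fin d) → EReal)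
    (μ : Measure (EuclideanSpace ℝ (Fin d))) : Prop :=
  IsProbabilityMeasure μ ∧ ∀ ρ : Measure (EuclideanSpace ℝ (Fin d)),
    IsProbabilityMeasure ρ → energy d W μ ≤ energy d W ρ

/-- The prototype potential `W_ε`: equal to `-1` when `||x| - 1| ≤ ε` and `0` otherwise. -/
def Weps (d : ℕ) (ε : ℝ) (x : EuclideanSpace ℝ (Fin d)) : ℝ :=
  if |‖x‖ - 1| ≤ ε then -1 else 0

/-- The energy `E_ε` of the uniform measure on the union of balls of radius `η ≤ ε/2`
centered at the vertices of a unit regular simplex equals `-d/(2(d+1))`. -/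
theorem energy_simplex_balls (d : ℕ) (hd : 2 ≤ d) (ε : ℝ) (hε0 : 0 < ε) (hε : ε < 1/2)
    (η : ℝ) (hη0 : 0 < η) (hη : η ≤ ε/2)
    (x : Fin (d+1) → EuclideanSpace ℝ (Fin d))
    (hx : ∀ i j, i ≠ j → ‖x i - x j‖ = 1) :
    energy d (fun y => ((Weps d ε y : ℝ) : EReal))
        (((((d : ℝ≥0∞) + 1) * volume (ball (0 : EuclideanSpace ℝ (Fin d)) η))⁻¹) •
          ∑ i, volume.restrict (ball (x i) η))
      = ((-(d : ℝ) / (2*((d : ℝ)+1)) : ℝ) : EReal) := by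
  classical
  set v : ℝ≥0∞ := volume (ball (0 : EuclideanSpace ℝ (Fin d)) η) with hv
  have hv0 : v ≠ 0 := (measure_ball_pos volume 0 hη0).ne'
  have hvt : v ≠ ⊤ := measure_ball_lt_top.ne
  have hball : ∀ i, volume (ball (x i) η) = v := fun i =>
    Measure.addHaar_ball_center volume (x i) η
  set c : ℝ≥0∞ := (((d : ℝ≥0∞) + 1) * v)⁻¹ with hc
  set μ0 : Measure (EuclideanSpace ℝ (Fin d)) := ∑ i, volume.restrict (ball (x i) η) with hμ0
  set ρ : Measure (EuclideanSpace ℝ (Fin d)) := c • μ0 with hρ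
  haveI : IsFiniteMeasure μ0 := by
    constructor
    rw [hμ0, Measure.finset_sum_apply]
    exact ENNReal.sum_lt_top.2 fun i _ => by
      rw [Measure.restrict_apply_univ]; exact measure_ball_lt_top
  haveI : SFinite ρ := by rw [hρ]; infer_instance
  -- values of the potential
  have hW1 : ∀ i j, i ≠ j → ∀ a ∈ ball (x i) η, ∀ b ∈ ball (x j) η,
      Weps d ε (a - b) = -1 := by
    intro i j hij a ha b hb
    rw [mem_ball, dist_eq_norm] at ha hb
    have h1 : |‖a - b‖ - ‖x i - x j‖| ≤ ‖(a - b) - (x i - x j)‖ := abs_norm_sub_norm_le _ _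
    have h2 : (a - b) - (x i - x j) = (a - x i) - (b - x j) := by abel
    have h3 : ‖(a - x i) - (b - x j)‖ ≤ ‖a - x i‖ + ‖b - x j‖ := norm_sub_le _ _
    rw [hx i j hij, h2] at h1
    have hle : |‖a - b‖ - 1| ≤ ε := by
      have := h1.trans h3
      have hab : |‖a - b‖ - 1| < 2 * η := by linarith
      linarith
    simp [Weps, hle]
  have hW2 : ∀ i, ∀ a ∈ ball (x i) η, ∀ b ∈ ball (x i) η, Weps d ε (a - b) = 0 := by
    intro i a ha b hb
    rw [mem_ball, dist_eq_norm] at ha hb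
    have h3 : ‖a - b‖ ≤ ‖a - x i‖ + ‖b - x i‖ := by
      have h : a - b = (a - x i) - (b - x i) := by abel
      rw [h]; exact norm_sub_le _ _
    have hn : ¬ |‖a - b‖ - 1| ≤ ε := by
      rw [abs_sub_comm, not_le]
      have h4 : 1 - ‖a - b‖ ≤ |1 - ‖a - b‖| := le_abs_self _
      have : ε < 1 - ‖a - b‖ := by linarith
      linarith
    simp [Weps, hn]
  -- conversion of toENNReal' on real coercions
  have toE : ∀ r : ℝ, EReal.toENNReal' (r : EReal) = ENNReal.ofReal r := by
    intro r
    rw [EReal.toENNReal', if_neg (EReal.coe_ne_top r), EReal.toReal_coe]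
  -- measurability
  have hWm : Measurable (Weps d ε) := by
    unfold Weps
    refine Measurable.ite ?_ measurable_const measurable_const
    exact measurableSet_le ((continuous_norm.sub continuous_const).abs.measurable)
      measurable_const
  have hfm : Measurable fun p : EuclideanSpace ℝ (Fin d) × EuclideanSpace ℝ (Fin d) =>
      ENNReal.ofReal (-(Weps d ε (p.1 - p.2))) :=
    ENNReal.measurable_ofReal.comp ((hWm.comp (measurable_fst.sub measurable_snd)).neg)
  -- the key computation
  have inner : ∀ i, ∀ a ∈ ball (x i) η,
      ∫⁻ b, ENNReal.ofReal (-(Weps d ε (a - b))) ∂ρ = c * ((d : ℝ≥0∞) * v) := by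
    intro i a ha
    rw [hρ, lintegral_smul_measure, hμ0, lintegral_finset_sum_measure]
    congr 1
    have hterm : ∀ j : Fin (d+1),
        ∫⁻ b in ball (x j) η, ENNReal.ofReal (-(Weps d ε (a - b))) ∂volume
          = if j = i then 0 else v := by
      intro j
      by_cases hji : j = i
      · subst hji
        rw [if_pos rfl]
        calc ∫⁻ b in ball (x j) η, ENNReal.ofReal (-(Weps d ε (a - b))) ∂volume
            = ∫⁻ _ in ball (x j) η, 0 ∂volume :=
              setLIntegral_congr_fun measurableSet_ball
                (fun b hb => by simp only [hW2 j a ha b hb]; simp)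
          _ = 0 := lintegral_zero
      · rw [if_neg hji]
        calc ∫⁻ b in ball (x j) η, ENNReal.ofReal (-(Weps d ε (a - b))) ∂volume
            = ∫⁻ _ in ball (x j) η, 1 ∂volume :=
              setLIntegral_congr_fun measurableSet_ball
                (fun b hb => by
                  simp only [hW1 i j (fun h => hji h.symm) a ha b hb]; norm_num)
          _ = v := by rw [setLIntegral_const, one_mul, hball j]
    rw [Finset.sum_congr rfl fun j _ => hterm j]
    rw [Finset.sum_ite, Finset.sum_const_zero, zero_add, Finset.sum_const, nsmul_eq_mul]
    congr 1
    have : (Finset.univ.filter fun j : Fin (d+1) => ¬ j = i) = Finset.univ.erase i := by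
      ext j; simp [Finset.mem_erase, and_comm]
    rw [this, Finset.card_erase_of_mem (Finset.mem_univ i), Finset.card_univ,
      Fintype.card_fin]
    simp
  have key : ∫⁻ p, ENNReal.ofReal (-(Weps d ε (p.1 - p.2))) ∂(ρ.prod ρ)
      = (d : ℝ≥0∞) * ((d : ℝ≥0∞) + 1)⁻¹ := by
    rw [lintegral_prod _ hfm.aemeasurable]
    have houter : ∀ i : Fin (d+1),
        ∫⁻ a in ball (x i) η,
          (∫⁻ b, ENNReal.ofReal (-(Weps d ε (a - b))) ∂ρ) ∂volume
          = c * ((d : ℝ≥0∞) * v) * v := by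
      intro i
      calc ∫⁻ a in ball (x i) η,
            (∫⁻ b, ENNReal.ofReal (-(Weps d ε (a - b))) ∂ρ) ∂volume
          = ∫⁻ _ in ball (x i) η, c * ((d : ℝ≥0∞) * v) ∂volume :=
            setLIntegral_congr_fun measurableSet_ball
              (fun a ha => inner i a ha)
        _ = c * ((d : ℝ≥0∞) * v) * v := by rw [setLIntegral_const, hball i]
    rw [hρ, lintegral_smul_measure, hμ0, lintegral_finset_sum_measure,
      Finset.sum_congr rfl fun i _ => houter i,
      Finset.sum_const, Finset.card_univ, Fintype.card_fin, nsmul_eq_mul]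
    push_cast
    -- now pure ℝ≥0∞ algebra
    rw [hc]
    have e1 : (((d : ℝ≥0∞) + 1) * v)⁻¹ = ((d : ℝ≥0∞) + 1)⁻¹ * v⁻¹ :=
      ENNReal.mul_inv (Or.inr hvt) (Or.inr hv0)
    have e2 : ((d : ℝ≥0∞) + 1) * ((d : ℝ≥0∞) + 1)⁻¹ = 1 :=
      ENNReal.mul_inv_cancel (by simp) (by simp [ENNReal.add_ne_top])
    have e3 : v⁻¹ * v = 1 := ENNReal.inv_mul_cancel hv0 hvt
    rw [e1]
    calc ((d : ℝ≥0∞) + 1)⁻¹ * v⁻¹ *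
          (((d : ℝ≥0∞) + 1) * (((d : ℝ≥0∞) + 1)⁻¹ * v⁻¹ * ((d : ℝ≥0∞) * v) * v))
        = (((d : ℝ≥0∞) + 1) * ((d : ℝ≥0∞) + 1)⁻¹) *
            ((v⁻¹ * v) * ((v⁻¹ * v) * ((d : ℝ≥0∞) * ((d : ℝ≥0∞) + 1)⁻¹))) := by ring
      _ = (d : ℝ≥0∞) * ((d : ℝ≥0∞) + 1)⁻¹ := by rw [e2, e3]; ring
  -- assemble
  have hpos : ∫⁻ p, (((Weps d ε (p.1 - p.2) : ℝ) : EReal)).toENNReal' ∂(ρ.prod ρ) = 0 := by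
    have hz : ∀ p : EuclideanSpace ℝ (Fin d) × EuclideanSpace ℝ (Fin d),
        (((Weps d ε (p.1 - p.2) : ℝ) : EReal)).toENNReal' = 0 := fun p => by
      rw [toE, ENNReal.ofReal_eq_zero]
      unfold Weps; split <;> norm_num
    simp only [hz, lintegral_zero]
  have hneg : ∫⁻ p, (-(((Weps d ε (p.1 - p.2) : ℝ) : EReal))).toENNReal' ∂(ρ.prod ρ)
      = (d : ℝ≥0∞) * ((d : ℝ≥0∞) + 1)⁻¹ := by
    have hfun : ∀ p : EuclideanSpace ℝ (Fin d) × EuclideanSpace ℝ (Fin d),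
        (-(((Weps d ε (p.1 - p.2) : ℝ) : EReal))).toENNReal'
          = ENNReal.ofReal (-(Weps d ε (p.1 - p.2))) := fun p => by
      rw [← EReal.coe_neg, toE]
    simp only [hfun]
    exact key
  simp only [energy, eInt]
  rw [hpos, hneg]
  have h1 : ENNReal.ofReal ((d : ℝ) + 1) = (d : ℝ≥0∞) + 1 := by
    rw [ENNReal.ofReal_add (by positivity) zero_le_one, ENNReal.ofReal_natCast,
      ENNReal.ofReal_one]
  have h2 : (d : ℝ≥0∞) * ((d : ℝ≥0∞) + 1)⁻¹
      = ENNReal.ofReal ((d : ℝ) * ((d : ℝ) + 1)⁻¹) := by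
    rw [ENNReal.ofReal_mul (by positivity), ENNReal.ofReal_natCast,
      ENNReal.ofReal_inv_of_pos (by positivity), h1]
  rw [h2]
  have h3 : ((ENNReal.ofReal ((d : ℝ) * ((d : ℝ) + 1)⁻¹) : ℝ≥0∞) : EReal)
      = (((d : ℝ) * ((d : ℝ) + 1)⁻¹ : ℝ) : EReal) := by
    rw [EReal.coe_ennreal_ofReal, max_eq_left (by positivity)]
  rw [h3, EReal.coe_ennreal_zero, zero_sub, ← EReal.coe_neg, ← EReal.coe_mul]
  congr 1
  have hd1 : (d : ℝ) + 1 ≠ 0 := by positivity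
  field_simp
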